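/- arXiv:2504.07865 — 2 statements merged into one kernel-verified Lean document; each statement's English description precedes it below -/
import Mathlib

section
/- Let Γ be a countable discrete abelian group and let π : (X,T_X) → (Y,T_Y) be an isometric extension of topological dynamical Γ-systems on compact metric spaces. If (Y,T_Y) is distal, then (X,T_X) is distal. -/
open Filter Topology

/-- A topological dynamical `Γ`-system `(X, T)` is *distal* if for every pair of distinct
points `x ≠ y` one has `inf_γ dist (T γ x) (T γ y) > 0`. -/
def IsDistal {Γ X : Type*} [AddCommGroup Γ] [MetricSpace X] (T : Γ → X → X) : Prop :=
  ∀ x y : X, x ≠ y → ∃ ε > 0, ∀ γ : Γ, ε ≤ dist (T γ x) (T γ y)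

/-- `π : X → Y` is an *isometric extension* of dynamical systems: there is a family of metrics
`d y` on the fibers `π ⁻¹' {y}` which is equivariant, glues to a continuous function on
`{(x₁,x₂) | π x₁ = π x₂}`, and for which any two fibers are isometric. -/
def IsIsometricExtension {Γ X Y : Type*} [AddCommGroup Γ]
    [TopologicalSpace X] [TopologicalSpace Y]
    (TX : Γ → X → X) (TY : Γ → Y → Y) (π : X → Y) : Prop :=
  ∃ d : Y → X → X → ℝ,
    (∀ y x₁ x₂, π x₁ = y → π x₂ = y → 0 ≤ d y x₁ x₂) ∧
    (∀ y x₁ x₂, π x₁ = y → π x₂ = y → d y x₁ x₂ = d y x₂ x₁) ∧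
    (∀ y x₁ x₂, π x₁ = y → π x₂ = y → (d y x₁ x₂ = 0 ↔ x₁ = x₂)) ∧
    (∀ y x₁ x₂ x₃, π x₁ = y → π x₂ = y → π x₃ = y →
      d y x₁ x₃ ≤ d y x₁ x₂ + d y x₂ x₃) ∧
    (∀ (γ : Γ) (y : Y) (x₁ x₂ : X), π x₁ = y → π x₂ = y →
      d (TY γ y) (TX γ x₁) (TX γ x₂) = d y x₁ x₂) ∧
    ContinuousOn (fun p : X × X => d (π p.1) p.1 p.2) {p : X × X | π p.1 = π p.2} ∧
    (∀ y₁ y₂ : Y, ∃ ξ : X → X, Set.BijOn ξ (π ⁻¹' {y₁}) (π ⁻¹' {y₂}) ∧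
      ∀ x₁ x₂, π x₁ = y₁ → π x₂ = y₁ → d y₂ (ξ x₁) (ξ x₂) = d y₁ x₁ x₂)

/-- If `π : (X,T_X) → (Y,T_Y)` is an isometric extension of topological
dynamical `Γ`-systems on compact metric spaces and `(Y,T_Y)` is distal, then `(X,T_X)` is
distal. -/
theorem isometric_extension_of_distal_is_distal
    {Γ X Y : Type*} [AddCommGroup Γ] [Countable Γ]
    [MetricSpace X] [CompactSpace X] [MetricSpace Y] [CompactSpace Y]
    (TX : Γ → X ≃ₜ X) (TY : Γ → Y ≃ₜ Y)
    (hTX : ∀ (γ δ : Γ) (x : X), TX (γ + δ) x = TX γ (TX δ x))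
    (hTY : ∀ (γ δ : Γ) (y : Y), TY (γ + δ) y = TY γ (TY δ y))
    (π : X → Y) (hπc : Continuous π) (hπs : Function.Surjective π)
    (hπT : ∀ (γ : Γ) (x : X), π (TX γ x) = TY γ (π x))
    (hiso : IsIsometricExtension (fun γ x => TX γ x) (fun γ y => TY γ y) π)
    (hY : IsDistal (fun γ y => TY γ y)) :
    IsDistal (fun γ x => TX γ x) := by
  obtain ⟨d, hd0, hdsymm, hdeq, hdtri, hdequiv, hdcont, -⟩ := hiso
  intro x y hxy
  by_cases hpi : π x = π y
  · -- fiber case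
    have hcpos : 0 < d (π x) x y := by
      rcases lt_or_eq_of_le (hd0 (π x) x y rfl hpi.symm) with h | h
      · exact h
      · exact absurd ((hdeq (π x) x y rfl hpi.symm).mp h.symm) hxy
    set c := d (π x) x y with hc
    set E : Set (X × X) := {p : X × X | ∃ γ : Γ, p = (TX γ x, TX γ y)} with hE
    set K := closure E with hKdef
    have hES : E ⊆ {p : X × X | π p.1 = π p.2} := by
      rintro p ⟨γ, rfl⟩
      simp only [Set.mem_setOf_eq]
      rw [hπT, hπT, hpi]
    have hKS : K ⊆ {p : X × X | π p.1 = π p.2} :=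
      closure_minimal hES (isClosed_eq (hπc.comp continuous_fst) (hπc.comp continuous_snd))
    have hEc : ∀ p ∈ E, d (π p.1) p.1 p.2 = c := by
      rintro p ⟨γ, rfl⟩
      simp only
      rw [hπT]
      exact hdequiv γ (π x) x y rfl hpi.symm
    have hfc : ∀ p ∈ K, d (π p.1) p.1 p.2 = c := by
      intro p hp
      obtain ⟨u, hu, hlim⟩ := mem_closure_iff_seq_limit.mp hp
      have h1 : Tendsto (fun n => d (π (u n).1) (u n).1 (u n).2) atTop
          (𝓝 (d (π p.1) p.1 p.2)) := by
        refine (hdcont p (hKS hp)).tendsto.comp ?_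
        exact tendsto_nhdsWithin_of_tendsto_nhds_of_eventually_within u hlim
          (Eventually.of_forall fun n => hES (hu n))
      have h2 : Tendsto (fun n => d (π (u n).1) (u n).1 (u n).2) atTop (𝓝 c) := by
        have : (fun n => d (π (u n).1) (u n).1 (u n).2) = fun _ => c := by
          funext n; exact hEc (u n) (hu n)
        rw [this]; exact tendsto_const_nhds
      exact tendsto_nhds_unique h1 h2
    have hKne : K.Nonempty := ⟨(TX 0 x, TX 0 y), subset_closure ⟨0, rfl⟩⟩
    have hKcomp : IsCompact K := isClosed_closure.isCompact
    obtain ⟨p, hpK, hpmin⟩ := hKcomp.exists_isMinOn hKne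
      (continuous_dist.comp (continuous_fst.prodMk continuous_snd)).continuousOn
    have hpne : p.1 ≠ p.2 := by
      intro h
      have h0 : d (π p.1) p.1 p.2 = 0 := by
        rw [← h] at *
        exact (hdeq (π p.1) p.1 p.1 rfl rfl).mpr rfl
      rw [hfc p hpK] at h0
      exact hcpos.ne' h0
    refine ⟨dist p.1 p.2, dist_pos.mpr hpne, fun γ => ?_⟩
    exact hpmin (subset_closure ⟨γ, rfl⟩)
  · -- base case
    obtain ⟨ε, hε, hεall⟩ := hY (π x) (π y) hpi
    have huc := CompactSpace.uniformContinuous_of_continuous hπc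
    rw [Metric.uniformContinuous_iff] at huc
    obtain ⟨δ, hδ, hδimp⟩ := huc ε hε
    refine ⟨δ, hδ, fun γ => ?_⟩
    by_contra h
    push_neg at h
    have := hδimp h
    rw [hπT, hπT] at this
    exact absurd (hεall γ) (not_le.mpr this)
end

section
/- Let Γ be a countable discrete abelian group, (X,T_X) a topological dynamical Γ-system, x_0 ∈ X, and suppose (x_0, x_1, …, x_{k-1}) is a k-term Erdős progression with x_i ∈ U_i for open sets U_1,…,U_{k-1} ⊆ X. Then there exists an infinite set B ⊆ Γ such that B^{⊕m} ⊆ A_m for every m ∈ {1,…,k−1}, where A_m = {γ ∈ Γ : T_X^γ x_0 ∈ U_m}. -/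
open Filter Topology

/-- The `m`-fold restricted sumset `B^{⊕m}` of sums of `m` pairwise distinct elements. -/
def restrictedSumset {Γ : Type*} [AddCommGroup Γ] (B : Set Γ) (m : ℕ) : Set Γ :=
  {s | ∃ f : Fin m → Γ, Function.Injective f ∧ (∀ i, f i ∈ B) ∧ s = ∑ i, f i}

/-- Suppose `(x 0, x 1, …, x (k-1))` is a `k`-term Erdős progression in
the topological dynamical `Γ`-system `(X,T)` — i.e. there is a sequence `(γ n)` of distinct
elements of `Γ` with `T^{γ n} (x i) → x (i+1)` for all `i < k-1` — and `x m ∈ U m` for open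
sets `U m ⊆ X`, `1 ≤ m ≤ k-1`. Then there exists an infinite set `B ⊆ Γ` such that
`B^{⊕m} ⊆ A_m = {γ : T^γ (x 0) ∈ U m}` for every `1 ≤ m ≤ k-1`. -/
theorem erdos_progression_gives_restricted_sumsets
    {Γ X : Type*} [AddCommGroup Γ] [Countable Γ]
    [MetricSpace X] [CompactSpace X]
    (T : Γ → X ≃ₜ X)
    (hT : ∀ (γ δ : Γ) (y : X), T (γ + δ) y = T γ (T δ y))
    (k : ℕ) (hk : 2 ≤ k)
    (x : ℕ → X)
    (hEP : ∃ γ : ℕ → Γ, Function.Injective γ ∧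
      ∀ i : ℕ, i < k - 1 →
        Tendsto (fun n => T (γ n) (x i)) atTop (nhds (x (i + 1))))
    (U : ℕ → Set X)
    (hUopen : ∀ m : ℕ, 1 ≤ m → m ≤ k - 1 → IsOpen (U m))
    (hxU : ∀ m : ℕ, 1 ≤ m → m ≤ k - 1 → x m ∈ U m) :
    ∃ B : Set Γ, B.Infinite ∧
      ∀ m : ℕ, 1 ≤ m → m ≤ k - 1 →
        restrictedSumset B m ⊆ {γ : Γ | T γ (x 0) ∈ U m} := by
  classical
  obtain ⟨γ, hγinj, hγ⟩ := hEP
  -- `T 0` is the identity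
  have hT0 : ∀ y : X, T 0 y = y := by
    intro y
    have h1 : T 0 (T 0 y) = T 0 y := by simpa using (hT 0 0 y).symm
    exact (T 0).injective h1
  -- enlarged family of open sets
  set V : ℕ → Set X := fun m => if m = 0 then Set.univ else U m with hV
  have hVopen : ∀ m, m ≤ k - 1 → IsOpen (V m) := by
    intro m hm
    by_cases h0 : m = 0
    · simp [hV, h0]
    · simpa [hV, h0] using hUopen m (Nat.one_le_iff_ne_zero.mpr h0) hm
  have hxV : ∀ i, i ≤ k - 1 → x i ∈ V i := by
    intro i hi
    by_cases h0 : i = 0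
    · simp [hV, h0]
    · simpa [hV, h0] using hxU i (Nat.one_le_iff_ne_zero.mpr h0) hi
  -- the invariant maintained by the finite sets to be constructed
  set Inv : Finset Γ → Prop := fun S =>
    ∀ F : Finset Γ, F ⊆ S → ∀ i : ℕ, i + F.card ≤ k - 1 →
      T (∑ b ∈ F, b) (x i) ∈ V (i + F.card) with hInv
  have hbase : Inv ∅ := by
    intro F hF i hi
    rw [Finset.subset_empty] at hF
    subst hF
    simpa [hT0] using hxV i (by simpa using hi)
  -- one-step extension
  have hstep : ∀ S : Finset Γ, Inv S → ∃ b : Γ, b ∉ S ∧ Inv (insert b S) := by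
    intro S hS
    have hmem : ∀ᶠ N in atTop, γ N ∉ S := by
      have hfin : {N : ℕ | γ N ∈ (S : Set Γ)}.Finite :=
        Set.Finite.preimage hγinj.injOn S.finite_toSet
      have h2 := hfin.compl_mem_cofinite
      rw [Nat.cofinite_eq_atTop] at h2
      filter_upwards [h2] with N hN
      simpa using hN
    have hE : ∀ᶠ N in atTop, ∀ F ∈ S.powerset, ∀ i ∈ Finset.range k,
        (i + F.card + 1 ≤ k - 1 → T (γ N + ∑ b ∈ F, b) (x i) ∈ V (i + F.card + 1)) := by
      rw [Filter.eventually_all_finset]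
      intro F hF
      rw [Filter.eventually_all_finset]
      intro i hi
      by_cases hcard : i + F.card + 1 ≤ k - 1
      · have hi' : i < k - 1 := by omega
        have htt : Tendsto (fun N => T (∑ b ∈ F, b) (T (γ N) (x i))) atTop
            (nhds (T (∑ b ∈ F, b) (x (i + 1)))) :=
          ((T (∑ b ∈ F, b)).continuous.tendsto _).comp (hγ i hi')
        have hmemV : T (∑ b ∈ F, b) (x (i + 1)) ∈ V (i + F.card + 1) := by
          have h3 := hS F (Finset.mem_powerset.mp hF) (i + 1) (by omega)
          have heq : i + 1 + F.card = i + F.card + 1 := by omega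
          rwa [heq] at h3
        have hopen : IsOpen (V (i + F.card + 1)) := hVopen _ (by omega)
        filter_upwards [htt.eventually_mem (hopen.mem_nhds hmemV)] with N hN _
        have heq : T (γ N + ∑ b ∈ F, b) (x i) = T (∑ b ∈ F, b) (T (γ N) (x i)) := by
          rw [add_comm]; exact hT _ _ _
        rw [heq]; exact hN
      · filter_upwards with N h; exact absurd h hcard
    obtain ⟨N, hN1, hN2⟩ := (hmem.and hE).exists
    refine ⟨γ N, hN1, ?_⟩
    intro F hF i hic
    by_cases hb : γ N ∈ F
    · have hF' : F.erase (γ N) ⊆ S := by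
        intro a ha
        have ha1 := Finset.mem_of_mem_erase ha
        have ha2 := Finset.ne_of_mem_erase ha
        rcases Finset.mem_insert.mp (hF ha1) with h | h
        · exact absurd h ha2
        · exact h
      have hpos : 1 ≤ F.card := Finset.card_pos.mpr ⟨_, hb⟩
      have hcard : (F.erase (γ N)).card + 1 = F.card := by
        rw [Finset.card_erase_of_mem hb]; omega
      have hsum : ∑ b ∈ F, b = γ N + ∑ b ∈ F.erase (γ N), b :=
        (Finset.add_sum_erase _ _ hb).symm
      have h4 := hN2 (F.erase (γ N)) (Finset.mem_powerset.mpr hF') i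
        (Finset.mem_range.mpr (by omega)) (by omega)
      have heq : i + F.card = i + (F.erase (γ N)).card + 1 := by omega
      rw [hsum, heq]
      exact h4
    · have hFS : F ⊆ S := by
        intro a ha
        rcases Finset.mem_insert.mp (hF ha) with h | h
        · exact absurd (h ▸ ha) hb
        · exact h
      exact hS F hFS i hic
  -- iterate the step to get an increasing chain of finite sets
  choose step hstep1 hstep2 using hstep
  let chain : ℕ → {S : Finset Γ // Inv S} := fun n =>
    Nat.rec ⟨∅, hbase⟩ (fun _ p => ⟨insert (step p.1 p.2) p.1, hstep2 p.1 p.2⟩) n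
  have hsucc : ∀ n, (chain (n + 1)).1 = insert (step (chain n).1 (chain n).2) (chain n).1 :=
    fun n => rfl
  have hmono : ∀ a b : ℕ, a ≤ b → (chain a).1 ⊆ (chain b).1 := by
    intro a b hab
    induction b, hab using Nat.le_induction with
    | base => exact Finset.Subset.refl _
    | succ n hn ih =>
      refine ih.trans ?_
      rw [hsucc]
      exact Finset.subset_insert _ _
  have hcard : ∀ n, (chain n).1.card = n := by
    intro n
    induction n with
    | zero => rfl
    | succ n ih =>
      rw [hsucc, Finset.card_insert_of_notMem (hstep1 _ _), ih]
  refine ⟨⋃ n, ((chain n).1 : Set Γ), ?_, ?_⟩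
  · -- infinitude
    by_contra h
    rw [Set.not_infinite] at h
    have hle : ∀ n : ℕ, n ≤ h.toFinset.card := by
      intro n
      rw [← hcard n]
      apply Finset.card_le_card
      intro a ha
      rw [Set.Finite.mem_toFinset]
      exact Set.mem_iUnion.mpr ⟨n, ha⟩
    exact absurd (hle (h.toFinset.card + 1)) (by omega)
  · -- the restricted sumsets land in the right sets
    intro m hm1 hm2 s hs
    obtain ⟨f, hfinj, hfB, rfl⟩ := hs
    have hex : ∀ i : Fin m, ∃ n : ℕ, f i ∈ (chain n).1 := by
      intro i
      obtain ⟨t, ⟨n, rfl⟩, hmem⟩ := hfB i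
      exact ⟨n, hmem⟩
    choose n hn using hex
    set N := Finset.univ.sup n with hN
    set F : Finset Γ := Finset.image f Finset.univ with hF
    have hsub : F ⊆ (chain N).1 := by
      intro a ha
      obtain ⟨i, _, rfl⟩ := Finset.mem_image.mp ha
      exact hmono (n i) N (Finset.le_sup (Finset.mem_univ i)) (hn i)
    have hcardF : F.card = m := by
      rw [hF, Finset.card_image_of_injective _ hfinj, Finset.card_univ, Fintype.card_fin]
    have hsumF : ∑ b ∈ F, b = ∑ i, f i := by
      rw [hF]
      exact Finset.sum_image (fun a _ b _ h => hfinj h)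
    have h5 := (chain N).2 F hsub 0 (by rw [hcardF]; omega)
    rw [hcardF, hsumF] at h5
    have hmz : 0 + m = m := by omega
    rw [hmz] at h5
    have hVm : V m = U m := by
      simp only [hV]
      rw [if_neg (by omega)]
    rw [hVm] at h5
    exact h5
end
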